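/- Under the symmetry hypothesis ℓ₁(Γ(z*)ℓ₂) = (ℓ₂(Γ(z)ℓ₁))* and with Θ a symmetric operator from X′ to X (i.e. ℓ₁(Θℓ₂) = (ℓ₂(Θℓ₁))*), one has |ℓ(Γ_Θ(z)ℓ)|² = (ℓ(Θℓ) + Re ℓ(Γ(z)ℓ))² + (Im z)²·‖G(z)ℓ‖⁴_H, where Γ_Θ(z) := Θ + Γ(z). -/

import Mathlib

open scoped ComplexConjugate

/-- `G(z) := C_H⁻¹ ∘ Ğ(z*)′`, with `Ğ(z) = τ ∘ R(z)`. -/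
noncomputable def Gop
    {H : Type*} [NormedAddCommGroup H] [InnerProductSpace ℂ H] [CompleteSpace H]
    {D : Type*} [NormedAddCommGroup D] [NormedSpace ℂ D]
    {X : Type*} [NormedAddCommGroup X] [NormedSpace ℂ X]
    (R : ℂ → (H →L[ℂ] D)) (τ : D →L[ℂ] X) (z : ℂ) (ℓ : X →L[ℂ] ℂ) : H :=
  (InnerProductSpace.toDual ℂ H).symm (ℓ.comp (τ.comp (R (conj z))))

/-- Under the symmetry `ℓ₁(Γ(z*)ℓ₂) = (ℓ₂(Γ(z)ℓ₁))*` and with `Θ`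
a symmetric operator from `X′` to `X` (`ℓ₁(Θℓ₂) = (ℓ₂(Θℓ₁))*`), one has, for
`Γ_Θ(z) := Θ + Γ(z)` and `ℓ ∈ D(Θ) ∩ D(Γ)`,
`|ℓ(Γ_Θ(z)ℓ)|² = (ℓ(Θℓ) + Re ℓ(Γ(z)ℓ))² + (Im z)² ‖G(z)ℓ‖⁴`. -/
theorem stmt8
    {H : Type*} [NormedAddCommGroup H] [InnerProductSpace ℂ H] [CompleteSpace H]
    {D : Type*} [NormedAddCommGroup D] [NormedSpace ℂ D]
    {X : Type*} [NormedAddCommGroup X] [NormedSpace ℂ X]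
    (ρ : Set ℂ) (R : ℂ → (H →L[ℂ] D)) (ι : D →L[ℂ] H) (τ : D →L[ℂ] X)
    (hρ : ∀ z ∈ ρ, conj z ∈ ρ)
    (hres : ∀ z ∈ ρ, ∀ w ∈ ρ,
      (z - w) • ((R w).comp (ι.comp (R z))) = R w - R z)
    (hadj : ∀ z ∈ ρ,
      ContinuousLinearMap.adjoint (ι.comp (R z)) = ι.comp (R (conj z)))
    (DΓ : Set (X →L[ℂ] ℂ)) (Γ : ℂ → (X →L[ℂ] ℂ) → X)
    (hrel : ∀ z ∈ ρ, ∀ w ∈ ρ, ∀ ℓ ∈ DΓ,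
      Γ z ℓ - Γ w ℓ = (z - w) • τ (R w (Gop R τ z ℓ)))
    (hsymm : ∀ z ∈ ρ, ∀ ℓ₁ ∈ DΓ, ∀ ℓ₂ ∈ DΓ,
      ℓ₁ (Γ (conj z) ℓ₂) = conj (ℓ₂ (Γ z ℓ₁)))
    (DΘ : Set (X →L[ℂ] ℂ)) (Θ : (X →L[ℂ] ℂ) → X)
    (hΘsymm : ∀ ℓ₁ ∈ DΘ, ∀ ℓ₂ ∈ DΘ, ℓ₁ (Θ ℓ₂) = conj (ℓ₂ (Θ ℓ₁)))
    {z : ℂ} (hz : z ∈ ρ) :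
    ∀ ℓ, ℓ ∈ DΘ → ℓ ∈ DΓ →
      ‖ℓ (Θ ℓ + Γ z ℓ)‖ ^ 2
        = ((ℓ (Θ ℓ)).re + (ℓ (Γ z ℓ)).re) ^ 2 + z.im ^ 2 * ‖Gop R τ z ℓ‖ ^ 4 := by
  intro ℓ hℓΘ hℓΓ
  set g := Gop R τ z ℓ with hg
  set a := ℓ (Θ ℓ) with haa
  set b := ℓ (Γ z ℓ) with hbb
  -- a is real
  have ha : a.im = 0 := by
    have h := hΘsymm ℓ hℓΘ ℓ hℓΘ
    have : a = conj a := h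
    have h2 : a.im = -a.im := by simpa using congrArg Complex.im this
    linarith
  -- key: b - conj b = (z - conj z) * ‖g‖²
  have hkey : b - conj b = (z - conj z) * (‖g‖ ^ 2 : ℝ) := by
    have h1 := hrel z hz (conj z) (hρ z hz) ℓ hℓΓ
    have h2 : ℓ (Γ z ℓ) - ℓ (Γ (conj z) ℓ) = (z - conj z) * ℓ (τ (R (conj z) g)) := by
      rw [← map_sub, h1, map_smul, smul_eq_mul]
    have h3 : ℓ (Γ (conj z) ℓ) = conj b := hsymm z hz ℓ hℓΓ ℓ hℓΓ
    have h4 : ℓ (τ (R (conj z) g)) = (‖g‖ ^ 2 : ℝ) := by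
      have h5 : (inner ℂ g g : ℂ) = ℓ (τ (R (conj z) g)) :=
        InnerProductSpace.toDual_symm_apply (𝕜 := ℂ) (E := H) (x := g)
          (y := ℓ.comp (τ.comp (R (conj z))))
      rw [← h5, inner_self_eq_norm_sq_to_K]
      norm_cast
    rw [← h3, ← h4]
    exact h2
  have hbim : b.im = z.im * ‖g‖ ^ 2 := by
    have h2 := congrArg Complex.im hkey
    simp [Complex.sub_conj, ← Complex.ofReal_pow, Complex.ofReal_re] at h2
    linarith
  have habs : ‖a + b‖ ^ 2 = (a + b).re ^ 2 + (a + b).im ^ 2 := by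
    rw [Complex.sq_norm, Complex.normSq_apply]; ring
  rw [map_add, habs]
  simp only [Complex.add_re, Complex.add_im, ha, hbim]
  ring
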